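/- The conditional expectation of X, under P, given that X lies in the union J_2 ∪ (J_{12} ∪ J_{42}) ∪ (J_{112} ∪ J_{142} ∪ J_{412} ∪ J_{442}) ∪ ⋯ (the part of the Sierpiński carpet strictly below the diagonal x_2 = x_1) equals (7/10, 3/10). -/

import Mathlib

open MeasureTheory Set
open scoped ENNReal

/-- The four contractive similarities of ratio 1/3 generating the Sierpiński carpet.
`S 0, S 1, S 2, S 3` correspond to `S_1, S_2, S_3, S_4` in the paper. -/
noncomputable def S (i : Fin 4) (p : ℝ × ℝ) : ℝ × ℝ :=
  (p.1 / 3 + (if i = 1 ∨ i = 3 then (2 : ℝ) / 3 else 0),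
   p.2 / 3 + (if i = 2 ∨ i = 3 then (2 : ℝ) / 3 else 0))

/-- Composition `S_{σ_1} ∘ ⋯ ∘ S_{σ_k}` along a word `σ`. -/
noncomputable def Sw (σ : List (Fin 4)) : ℝ × ℝ → ℝ × ℝ :=
  σ.foldr (fun i g => S i ∘ g) id

/-- The unit square `J = [0,1] × [0,1]`. -/
def K : Set (ℝ × ℝ) := Icc (0, 0) (1, 1)

/-- The basic square `J_σ = S_σ([0,1]²)`. -/
noncomputable def Jw (σ : List (Fin 4)) : Set (ℝ × ℝ) := Sw σ '' K

/-- The self-similarity equation `P = (1/4) ∑_{i=1}^4 P ∘ S_i⁻¹`. -/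
def SelfSimilar (P : Measure (ℝ × ℝ)) : Prop :=
  P = (1 / 4 : ℝ≥0∞) • P.map (S 0) + (1 / 4 : ℝ≥0∞) • P.map (S 1)
    + (1 / 4 : ℝ≥0∞) • P.map (S 2) + (1 / 4 : ℝ≥0∞) • P.map (S 3)

/-- Distortion error of a set `α` of points: `∫ min_{a∈α} ‖x−a‖² dP`
(squared Euclidean distance). -/
noncomputable def distortion (P : Measure (ℝ × ℝ)) (α : Set (ℝ × ℝ)) : ℝ :=
  ∫ x, (⨅ a ∈ α, ((x.1 - a.1) ^ 2 + (x.2 - a.2) ^ 2)) ∂P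

/-- The `n`-th quantization error. -/
noncomputable def Vq (P : Measure (ℝ × ℝ)) (n : ℕ) : ℝ :=
  sInf (distortion P '' {α | α.Finite ∧ α.Nonempty ∧ α.ncard ≤ n})

open Filter

lemma S_zero (p : ℝ × ℝ) : S 0 p = (p.1 / 3, p.2 / 3) := by simp [S]
lemma S_one (p : ℝ × ℝ) : S 1 p = (p.1 / 3 + 2/3, p.2 / 3) := by simp [S]
lemma S_two (p : ℝ × ℝ) : S 2 p = (p.1 / 3, p.2 / 3 + 2/3) := by simp [S]
lemma S_three (p : ℝ × ℝ) : S 3 p = (p.1 / 3 + 2/3, p.2 / 3 + 2/3) := by simp [S]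
lemma measurable_S (i : Fin 4) : Measurable (S i) := by unfold S; fun_prop
lemma continuous_S (i : Fin 4) : Continuous (S i) := by unfold S; fun_prop
lemma mem_K {p : ℝ × ℝ} : p ∈ K ↔ (0 ≤ p.1 ∧ 0 ≤ p.2) ∧ p.1 ≤ 1 ∧ p.2 ≤ 1 := by
  simp [K, Prod.le_def, mem_Icc]
lemma S_mapsTo_K (i : Fin 4) : MapsTo (S i) K K := by
  intro p hp
  rw [mem_K] at hp ⊢
  unfold S
  dsimp only
  split_ifs <;>
    exact ⟨⟨by linarith [hp.1.1], by linarith [hp.1.2]⟩, by linarith [hp.2.1], by linarith [hp.2.2]⟩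
lemma S_injective (i : Fin 4) : Function.Injective (S i) := by
  intro p q h
  have h1 := congrArg Prod.fst h
  have h2 := congrArg Prod.snd h
  unfold S at h1 h2
  dsimp only at h1 h2
  exact Prod.ext (by linarith) (by linarith)

lemma Sw_nil : Sw [] = id := rfl
lemma Sw_cons (i : Fin 4) (σ : List (Fin 4)) : Sw (i :: σ) = S i ∘ Sw σ := rfl
lemma continuous_Sw (σ : List (Fin 4)) : Continuous (Sw σ) := by
  induction σ with
  | nil => exact continuous_id
  | cons i σ ih => rw [Sw_cons]; exact (continuous_S i).comp ih
lemma Jw_nil : Jw [] = K := by simp [Jw, Sw_nil]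
lemma Jw_cons (i : Fin 4) (σ : List (Fin 4)) : Jw (i :: σ) = S i '' Jw σ := by
  unfold Jw
  rw [Sw_cons, image_comp]
lemma Jw_subset_K (σ : List (Fin 4)) : Jw σ ⊆ K := by
  induction σ with
  | nil => rw [Jw_nil]
  | cons i σ ih => rw [Jw_cons]; exact (image_mono (f := S i) ih).trans (S_mapsTo_K i).image_subset
lemma isCompact_Jw (σ : List (Fin 4)) : IsCompact (Jw σ) :=
  (isCompact_Icc : IsCompact K).image (continuous_Sw σ)

/-- The union below the diagonal. -/
noncomputable def Uset : Set (ℝ × ℝ) :=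
  ⋃ τ ∈ {l : List (Fin 4) | ∀ i ∈ l, i = 0 ∨ i = 3}, Jw (τ ++ [1])

lemma mem_Uset {y : ℝ × ℝ} :
    y ∈ Uset ↔ ∃ τ : List (Fin 4), (∀ i ∈ τ, i = 0 ∨ i = 3) ∧ y ∈ Jw (τ ++ [1]) := by
  simp [Uset, mem_iUnion]

lemma measurableSet_Uset : MeasurableSet Uset := by
  refine MeasurableSet.biUnion (Set.to_countable _) fun τ _ => (isCompact_Jw _).measurableSet

lemma Uset_subset_K : Uset ⊆ K := by
  intro y hy
  obtain ⟨τ, _, hmem⟩ := mem_Uset.1 hy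
  exact Jw_subset_K _ hmem

lemma diag_Uset : ∀ y ∈ Uset, y.2 < y.1 := by
  intro y hy
  obtain ⟨τ, hτ, hmem⟩ := mem_Uset.1 hy
  clear hy
  induction τ generalizing y with
  | nil =>
    rw [List.nil_append, Jw_cons, Jw_nil] at hmem
    obtain ⟨x, hx, rfl⟩ := hmem
    rw [mem_K] at hx
    rw [S_one]
    dsimp only
    linarith [hx.1.2, hx.2.2]
  | cons i τ' ih =>
    rw [List.cons_append, Jw_cons] at hmem
    obtain ⟨x, hx, rfl⟩ := hmem
    have hx' := ih x (fun j hj => hτ j (List.mem_cons_of_mem i hj)) hx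
    rcases hτ i (List.mem_cons_self (a := i) (l := τ')) with rfl | rfl
    · rw [S_zero]; dsimp only; linarith
    · rw [S_three]; dsimp only; linarith

lemma K_subset_S1 : K ⊆ S 1 ⁻¹' Uset := by
  intro x hx
  rw [mem_preimage]
  exact mem_Uset.2 ⟨[], by simp, ⟨x, hx, rfl⟩⟩

lemma S2_inter_K : S 2 ⁻¹' Uset ∩ K = ∅ := by
  ext x
  simp only [mem_inter_iff, mem_preimage, mem_empty_iff_false, iff_false, not_and]
  intro h2 hK
  have hd := diag_Uset _ h2
  rw [S_two] at hd
  rw [mem_K] at hK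
  dsimp only at hd
  linarith [hK.1.1, hK.2.1]

lemma S0_inter_K : S 0 ⁻¹' Uset ∩ K = Uset := by
  apply Subset.antisymm
  · rintro x ⟨hx, hxK⟩
    rw [mem_preimage] at hx
    obtain ⟨τ, hτ, hmem⟩ := mem_Uset.1 hx
    cases τ with
    | nil =>
      exfalso
      rw [List.nil_append, Jw_cons, Jw_nil] at hmem
      obtain ⟨z, hz, hEq⟩ := hmem
      have h1 := congrArg Prod.fst hEq
      rw [S_one, S_zero] at h1
      dsimp only at h1
      rw [mem_K] at hz hxK
      linarith [hz.1.1, hxK.2.1]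
    | cons i τ' =>
      rw [List.cons_append, Jw_cons] at hmem
      obtain ⟨z, hz, hEq⟩ := hmem
      rcases hτ i (List.mem_cons_self (a := i) (l := τ')) with rfl | rfl
      · obtain rfl : z = x := S_injective 0 hEq
        exact mem_Uset.2 ⟨τ', fun j hj => hτ j (List.mem_cons_of_mem _ hj), hz⟩
      · exfalso
        have hzK := Jw_subset_K _ hz
        have h1 := congrArg Prod.fst hEq
        rw [S_three, S_zero] at h1
        dsimp only at h1
        rw [mem_K] at hzK hxK
        linarith [hzK.1.1, hxK.2.1]
  · intro x hx
    refine ⟨?_, Uset_subset_K hx⟩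
    rw [mem_preimage]
    obtain ⟨τ, hτ, hmem⟩ := mem_Uset.1 hx
    refine mem_Uset.2 ⟨0 :: τ, ?_, ?_⟩
    · intro j hj
      rcases List.mem_cons.1 hj with rfl | hj
      · exact Or.inl rfl
      · exact hτ j hj
    · rw [List.cons_append, Jw_cons]; exact ⟨x, hmem, rfl⟩

lemma S3_inter_K : S 3 ⁻¹' Uset ∩ K = Uset := by
  apply Subset.antisymm
  · rintro x ⟨hx, hxK⟩
    rw [mem_preimage] at hx
    obtain ⟨τ, hτ, hmem⟩ := mem_Uset.1 hx
    cases τ with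
    | nil =>
      exfalso
      rw [List.nil_append, Jw_cons, Jw_nil] at hmem
      obtain ⟨z, hz, hEq⟩ := hmem
      have h2 := congrArg Prod.snd hEq
      rw [S_one, S_three] at h2
      dsimp only at h2
      rw [mem_K] at hz hxK
      linarith [hz.2.2, hxK.1.2]
    | cons i τ' =>
      rw [List.cons_append, Jw_cons] at hmem
      obtain ⟨z, hz, hEq⟩ := hmem
      rcases hτ i (List.mem_cons_self (a := i) (l := τ')) with rfl | rfl
      · exfalso
        have hzK := Jw_subset_K _ hz
        have h1 := congrArg Prod.fst hEq
        rw [S_zero, S_three] at h1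
        dsimp only at h1
        rw [mem_K] at hzK hxK
        linarith [hzK.2.1, hxK.1.1]
      · obtain rfl : z = x := S_injective 3 hEq
        exact mem_Uset.2 ⟨τ', fun j hj => hτ j (List.mem_cons_of_mem _ hj), hz⟩
  · intro x hx
    refine ⟨?_, Uset_subset_K hx⟩
    rw [mem_preimage]
    obtain ⟨τ, hτ, hmem⟩ := mem_Uset.1 hx
    refine mem_Uset.2 ⟨3 :: τ, ?_, ?_⟩
    · intro j hj
      rcases List.mem_cons.1 hj with rfl | hj
      · exact Or.inr rfl
      · exact hτ j hj
    · rw [List.cons_append, Jw_cons]; exact ⟨x, hmem, rfl⟩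


lemma measurableSet_K : MeasurableSet K := measurableSet_Icc

/-- The enlarged squares. -/
def KR (R : ℝ) : Set (ℝ × ℝ) := Icc (-R, -R) (1 + R, 1 + R)

lemma mem_KR {R : ℝ} {p : ℝ × ℝ} :
    p ∈ KR R ↔ (-R ≤ p.1 ∧ -R ≤ p.2) ∧ p.1 ≤ 1 + R ∧ p.2 ≤ 1 + R := by
  simp [KR, Prod.le_def, mem_Icc]

lemma measurableSet_KR (R : ℝ) : MeasurableSet (KR R) := measurableSet_Icc

lemma KR_zero : KR 0 = K := by simp [KR, K]

lemma KR_mono {R R' : ℝ} (h : R ≤ R') : KR R ⊆ KR R' := by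
  intro p hp
  rw [mem_KR] at hp ⊢
  exact ⟨⟨by linarith [hp.1.1], by linarith [hp.1.2]⟩, by linarith [hp.2.1], by linarith [hp.2.2]⟩

lemma KR_subset_S_preimage (i : Fin 4) {R : ℝ} (hR : 0 ≤ R) :
    KR (3 * R) ⊆ S i ⁻¹' KR R := by
  intro p hp
  rw [mem_KR] at hp
  rw [mem_preimage, mem_KR]
  unfold S
  dsimp only
  split_ifs <;>
    exact ⟨⟨by linarith [hp.1.1], by linarith [hp.1.2]⟩, by linarith [hp.2.1], by linarith [hp.2.2]⟩

lemma P_apply (P : Measure (ℝ × ℝ)) (hP : SelfSimilar P) {A : Set (ℝ × ℝ)}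
    (hA : MeasurableSet A) :
    P A = 1/4 * P (S 0 ⁻¹' A) + 1/4 * P (S 1 ⁻¹' A) + 1/4 * P (S 2 ⁻¹' A)
      + 1/4 * P (S 3 ⁻¹' A) := by
  conv_lhs => rw [hP]
  rw [Measure.coe_add, Pi.add_apply, Measure.coe_add, Pi.add_apply, Measure.coe_add, Pi.add_apply,
    Measure.smul_apply, Measure.smul_apply, Measure.smul_apply, Measure.smul_apply,
    Measure.map_apply (measurable_S 0) hA, Measure.map_apply (measurable_S 1) hA,
    Measure.map_apply (measurable_S 2) hA, Measure.map_apply (measurable_S 3) hA]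
  simp [smul_eq_mul]

lemma quarter_sum (a : ℝ≥0∞) : (1/4 : ℝ≥0∞) * a + 1/4 * a + 1/4 * a + 1/4 * a = a := by
  rw [← add_mul, ← add_mul, ← add_mul]
  have h : (1/4 + 1/4 + 1/4 + 1/4 : ℝ≥0∞) = 4 * 4⁻¹ := by
    simp only [one_div]; ring
  rw [h, ENNReal.mul_inv_cancel (by norm_num) (by norm_num), one_mul]

lemma P_KR_eq (P : Measure (ℝ × ℝ)) [IsProbabilityMeasure P] (hP : SelfSimilar P)
    {R : ℝ} (hR : 0 ≤ R) : P (KR R) = P (KR (3 * R)) := by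
  refine le_antisymm (measure_mono (KR_mono (by linarith))) ?_
  calc P (KR (3 * R)) = 1/4 * P (KR (3*R)) + 1/4 * P (KR (3*R)) + 1/4 * P (KR (3*R))
      + 1/4 * P (KR (3*R)) := (quarter_sum _).symm
    _ ≤ 1/4 * P (S 0 ⁻¹' KR R) + 1/4 * P (S 1 ⁻¹' KR R) + 1/4 * P (S 2 ⁻¹' KR R)
      + 1/4 * P (S 3 ⁻¹' KR R) := by
        gcongr <;> exact KR_subset_S_preimage _ hR
    _ = P (KR R) := (P_apply P hP measurableSet_Icc).symm

lemma P_K (P : Measure (ℝ × ℝ)) [IsProbabilityMeasure P] (hP : SelfSimilar P) : P K = 1 := by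
  -- first, P (KR (3^n)) = P (KR 1) for all n
  have hup : ∀ n : ℕ, P (KR (3 ^ n)) = P (KR 1) := by
    intro n
    induction n with
    | zero => norm_num
    | succ n ih =>
      rw [← ih, pow_succ, mul_comm]
      exact (P_KR_eq P hP (by positivity)).symm
  -- P (KR 1) = 1 by continuity from below
  have hKR1 : P (KR 1) = 1 := by
    have hmono : Monotone fun n : ℕ => KR (3 ^ n) :=
      fun n m hnm => KR_mono (by exact_mod_cast pow_le_pow_right₀ (by norm_num) hnm)
    have hunion : ⋃ n : ℕ, KR ((3 : ℝ) ^ n) = univ := by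
      ext p
      simp only [mem_iUnion, mem_univ, iff_true]
      obtain ⟨n, hn⟩ := pow_unbounded_of_one_lt (max (max (-p.1) (-p.2)) (max p.1 p.2))
        (show (1:ℝ) < 3 by norm_num)
      refine ⟨n, mem_KR.2 ⟨⟨?_, ?_⟩, ?_, ?_⟩⟩
      · have := (le_max_left (max (-p.1) (-p.2)) _).trans hn.le
        have := (le_max_left (-p.1) (-p.2)).trans this
        linarith
      · have := (le_max_left (max (-p.1) (-p.2)) _).trans hn.le
        have := (le_max_right (-p.1) (-p.2)).trans this
        linarith
      · have := (le_max_right (max (-p.1) (-p.2)) _).trans hn.le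
        have := (le_max_left p.1 p.2).trans this
        linarith
      · have := (le_max_right (max (-p.1) (-p.2)) _).trans hn.le
        have := (le_max_right p.1 p.2).trans this
        linarith
    have htend := tendsto_measure_iUnion_atTop (μ := P) hmono
    rw [hunion] at htend
    have : Tendsto (fun _ : ℕ => P (KR 1)) atTop (nhds (P univ)) := by
      refine htend.congr fun n => ?_
      exact (hup n)
    rw [← tendsto_nhds_unique this tendsto_const_nhds, measure_univ]
  -- now descend: P (KR ((1/3)^n)) = P (KR 1)
  have hdown : ∀ n : ℕ, P (KR ((1/3 : ℝ) ^ n)) = P (KR 1) := by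
    intro n
    induction n with
    | zero => norm_num
    | succ n ih =>
      rw [← ih]
      have h3 : (3 : ℝ) * (1/3) ^ (n+1) = (1/3) ^ n := by
        rw [pow_succ]; ring
      rw [← h3]
      exact P_KR_eq P hP (by positivity)
  have hanti : Antitone fun n : ℕ => KR ((1/3 : ℝ) ^ n) :=
    fun n m hnm => KR_mono (pow_le_pow_of_le_one (by norm_num) (by norm_num) hnm)
  have hinter : ⋂ n : ℕ, KR ((1/3 : ℝ) ^ n) = K := by
    apply Subset.antisymm
    · intro p hp
      rw [mem_iInter] at hp
      have h13 : Tendsto (fun n : ℕ => ((1:ℝ)/3) ^ n) atTop (nhds 0) :=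
        tendsto_pow_atTop_nhds_zero_of_lt_one (by norm_num) (by norm_num)
      rw [mem_K]
      have h1 : 0 ≤ p.1 := by
        have : Tendsto (fun n : ℕ => -((1:ℝ)/3) ^ n) atTop (nhds 0) := by
          simpa using h13.neg
        exact le_of_tendsto this (Eventually.of_forall fun n => (mem_KR.1 (hp n)).1.1)
      have h2 : 0 ≤ p.2 := by
        have : Tendsto (fun n : ℕ => -((1:ℝ)/3) ^ n) atTop (nhds 0) := by
          simpa using h13.neg
        exact le_of_tendsto this (Eventually.of_forall fun n => (mem_KR.1 (hp n)).1.2)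
      have h3 : p.1 ≤ 1 := by
        have : Tendsto (fun n : ℕ => 1 + ((1:ℝ)/3) ^ n) atTop (nhds 1) := by
          simpa using (tendsto_const_nhds (x := (1:ℝ)) (f := atTop)).add h13
        exact ge_of_tendsto this (Eventually.of_forall fun n => (mem_KR.1 (hp n)).2.1)
      have h4 : p.2 ≤ 1 := by
        have : Tendsto (fun n : ℕ => 1 + ((1:ℝ)/3) ^ n) atTop (nhds 1) := by
          simpa using (tendsto_const_nhds (x := (1:ℝ)) (f := atTop)).add h13
        exact ge_of_tendsto this (Eventually.of_forall fun n => (mem_KR.1 (hp n)).2.2)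
      exact ⟨⟨h1, h2⟩, h3, h4⟩
    · intro p hp
      rw [mem_iInter]
      intro n
      rw [← KR_zero] at hp
      exact KR_mono (by positivity) hp
  have htend2 := tendsto_measure_iInter_atTop (μ := P)
    (fun n => (measurableSet_KR _).nullMeasurableSet) hanti
    ⟨0, measure_ne_top _ _⟩
  rw [hinter] at htend2
  have : Tendsto (fun _ : ℕ => P (KR 1)) atTop (nhds (P K)) := by
    refine htend2.congr fun n => (hdown n)
  rw [tendsto_nhds_unique this tendsto_const_nhds, hKR1]

lemma P_compl_K (P : Measure (ℝ × ℝ)) [IsProbabilityMeasure P] (hP : SelfSimilar P) :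
    P Kᶜ = 0 := by
  rw [measure_compl measurableSet_K (measure_ne_top _ _), P_K P hP, measure_univ, tsub_self]

lemma P_eq_inter (P : Measure (ℝ × ℝ)) [IsProbabilityMeasure P] (hP : SelfSimilar P)
    (A : Set (ℝ × ℝ)) : P A = P (A ∩ K) := by
  rw [← measure_inter_add_diff A measurableSet_K]
  have : P (A \ K) = 0 :=
    measure_mono_null (fun x hx => hx.2) (P_compl_K P hP)
  rw [this, add_zero]


section Integration

lemma integrable_of_K {E : Type*} [NormedAddCommGroup E] {μ : Measure (ℝ × ℝ)}
    [IsFiniteMeasure μ] (hμ : μ Kᶜ = 0) {f : ℝ × ℝ → E}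
    (hf : AEStronglyMeasurable f μ) {C : ℝ} (hb : ∀ x ∈ K, ‖f x‖ ≤ C) :
    Integrable f μ := by
  refine ⟨hf, HasFiniteIntegral.of_bounded (C := C) ?_⟩
  have hae : ∀ᵐ x ∂μ, x ∈ K := by
    rw [ae_iff]
    exact hμ
  filter_upwards [hae] with x hx using hb x hx

lemma map_compl_K (P : Measure (ℝ × ℝ)) [IsProbabilityMeasure P] (hP : SelfSimilar P)
    (i : Fin 4) : (P.map (S i)) Kᶜ = 0 := by
  rw [Measure.map_apply (measurable_S i) measurableSet_K.compl]
  refine measure_mono_null ?_ (P_compl_K P hP)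
  intro x hx
  exact fun hxK => hx (S_mapsTo_K i hxK)

lemma int_decomp (P : Measure (ℝ × ℝ)) [IsProbabilityMeasure P] (hP : SelfSimilar P)
    {A : Set (ℝ × ℝ)} (hA : MeasurableSet A) {f : ℝ × ℝ → ℝ} (hf : Measurable f)
    {C : ℝ} (hb : ∀ x ∈ K, ‖f x‖ ≤ C) :
    ∫ x in A, f x ∂P
      = 1/4 * ∫ x in S 0 ⁻¹' A, f (S 0 x) ∂P + 1/4 * ∫ x in S 1 ⁻¹' A, f (S 1 x) ∂P
      + 1/4 * ∫ x in S 2 ⁻¹' A, f (S 2 x) ∂P + 1/4 * ∫ x in S 3 ⁻¹' A, f (S 3 x) ∂P := by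
  have hmi : ∀ i : Fin 4, Integrable f ((P.map (S i)).restrict A) := by
    intro i
    haveI : IsProbabilityMeasure (P.map (S i)) :=
      Measure.isProbabilityMeasure_map (measurable_S i).aemeasurable
    exact (integrable_of_K (map_compl_K P hP i) hf.aestronglyMeasurable hb).restrict
  have hq : ∀ i : Fin 4, Integrable f (((1/4 : ℝ≥0∞) • P.map (S i)).restrict A) := by
    intro i
    rw [Measure.restrict_smul]
    exact (hmi i).smul_measure (by norm_num)
  have hterm : ∀ i : Fin 4, (∫ x, f x ∂(((1/4 : ℝ≥0∞) • P.map (S i)).restrict A))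
      = 1/4 * ∫ x in S i ⁻¹' A, f (S i x) ∂P := by
    intro i
    rw [Measure.restrict_smul, integral_smul_measure,
      setIntegral_map hA hf.aestronglyMeasurable (measurable_S i).aemeasurable]
    rw [smul_eq_mul]
    norm_num [ENNReal.toReal_inv]
  conv_lhs => rw [hP]
  rw [Measure.restrict_add, Measure.restrict_add, Measure.restrict_add,
    integral_add_measure (((hq 0).add_measure (hq 1)).add_measure (hq 2)) (hq 3),
    integral_add_measure ((hq 0).add_measure (hq 1)) (hq 2),
    integral_add_measure (hq 0) (hq 1), hterm 0, hterm 1, hterm 2, hterm 3]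

lemma restrict_S0 (P : Measure (ℝ × ℝ)) [IsProbabilityMeasure P] (hP : SelfSimilar P) :
    P.restrict (S 0 ⁻¹' Uset) = P.restrict Uset := by
  apply Measure.restrict_congr_set
  rw [ae_eq_set]
  constructor
  · refine measure_mono_null ?_ (P_compl_K P hP)
    rintro x ⟨hx1, hx2⟩ hxK
    exact hx2 (S0_inter_K ▸ (⟨hx1, hxK⟩ : x ∈ S 0 ⁻¹' Uset ∩ K))
  · have hsub : Uset ⊆ S 0 ⁻¹' Uset := fun x hx => (S0_inter_K.symm ▸ hx : x ∈ _ ∩ K).1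
    rw [diff_eq_empty.2 hsub]
    exact measure_empty

lemma restrict_S3 (P : Measure (ℝ × ℝ)) [IsProbabilityMeasure P] (hP : SelfSimilar P) :
    P.restrict (S 3 ⁻¹' Uset) = P.restrict Uset := by
  apply Measure.restrict_congr_set
  rw [ae_eq_set]
  constructor
  · refine measure_mono_null ?_ (P_compl_K P hP)
    rintro x ⟨hx1, hx2⟩ hxK
    exact hx2 (S3_inter_K ▸ (⟨hx1, hxK⟩ : x ∈ S 3 ⁻¹' Uset ∩ K))
  · have hsub : Uset ⊆ S 3 ⁻¹' Uset := fun x hx => (S3_inter_K.symm ▸ hx : x ∈ _ ∩ K).1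
    rw [diff_eq_empty.2 hsub]
    exact measure_empty

lemma restrict_S1 (P : Measure (ℝ × ℝ)) [IsProbabilityMeasure P] (hP : SelfSimilar P) :
    P.restrict (S 1 ⁻¹' Uset) = P := by
  have : P.restrict (S 1 ⁻¹' Uset) = P.restrict univ := by
    apply Measure.restrict_congr_set
    rw [ae_eq_set]
    constructor
    · rw [diff_eq_empty.2 (subset_univ _)]
      exact measure_empty
    · refine measure_mono_null ?_ (P_compl_K P hP)
      rintro x ⟨-, hx2⟩ hxK
      exact hx2 (K_subset_S1 hxK)
  rw [this, Measure.restrict_univ]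

lemma P_S2_zero (P : Measure (ℝ × ℝ)) [IsProbabilityMeasure P] (hP : SelfSimilar P) :
    P (S 2 ⁻¹' Uset) = 0 := by
  refine measure_mono_null ?_ (P_compl_K P hP)
  intro x hx hxK
  exact absurd (S2_inter_K ▸ (⟨hx, hxK⟩ : x ∈ S 2 ⁻¹' Uset ∩ K)) (notMem_empty x)

lemma toReal_comb {P : Measure (ℝ × ℝ)} [IsProbabilityMeasure P] {A B C D E : Set (ℝ × ℝ)}
    (h : P A = 1/4 * P B + 1/4 * P C + 1/4 * P D + 1/4 * P E) :
    (P A).toReal = 1/4 * (P B).toReal + 1/4 * (P C).toReal + 1/4 * (P D).toReal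
      + 1/4 * (P E).toReal := by
  have hq : (1/4 : ℝ≥0∞) ≠ ⊤ := by norm_num
  have m1 : (1/4 : ℝ≥0∞) * P B ≠ ⊤ := ENNReal.mul_ne_top hq (measure_ne_top _ _)
  have m2 : (1/4 : ℝ≥0∞) * P C ≠ ⊤ := ENNReal.mul_ne_top hq (measure_ne_top _ _)
  have m3 : (1/4 : ℝ≥0∞) * P D ≠ ⊤ := ENNReal.mul_ne_top hq (measure_ne_top _ _)
  have m4 : (1/4 : ℝ≥0∞) * P E ≠ ⊤ := ENNReal.mul_ne_top hq (measure_ne_top _ _)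
  have h' := congrArg ENNReal.toReal h
  rw [ENNReal.toReal_add (by exact ENNReal.add_ne_top.2 ⟨ENNReal.add_ne_top.2 ⟨m1, m2⟩, m3⟩) m4,
    ENNReal.toReal_add (ENNReal.add_ne_top.2 ⟨m1, m2⟩) m3,
    ENNReal.toReal_add m1 m2,
    ENNReal.toReal_mul, ENNReal.toReal_mul, ENNReal.toReal_mul, ENNReal.toReal_mul] at h'
  norm_num [ENNReal.toReal_inv] at h' ⊢
  linarith

end Integration

/-- The conditional expectation of `X` on the part of the carpet strictly below the
diagonal, `⋃_{k≥0} ⋃_{τ ∈ {1,4}^k} J_{τ2}`, equals `(7/10, 3/10)`.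
(Indices: letter `1` is `0`, letter `2` is `1`, letter `4` is `3`.) -/
theorem stmt_9 (P : Measure (ℝ × ℝ)) [IsProbabilityMeasure P] (hP : SelfSimilar P)
    (U : Set (ℝ × ℝ))
    (hU : U = ⋃ τ ∈ {l : List (Fin 4) | ∀ i ∈ l, i = 0 ∨ i = 3}, Jw (τ ++ [1])) :
    (P U).toReal⁻¹ • ∫ x in U, x ∂P = ((7 : ℝ) / 10, (3 : ℝ) / 10) := by
  have hU' : U = Uset := hU
  subst hU'
  -- the measure of U
  have hmeas := toReal_comb (P_apply P hP measurableSet_Uset)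
  have h0 : P (S 0 ⁻¹' Uset) = P Uset := by
    rw [P_eq_inter P hP (S 0 ⁻¹' Uset), S0_inter_K]
  have h3 : P (S 3 ⁻¹' Uset) = P Uset := by
    rw [P_eq_inter P hP (S 3 ⁻¹' Uset), S3_inter_K]
  have h1 : P (S 1 ⁻¹' Uset) = 1 := by
    refine le_antisymm prob_le_one ?_
    rw [← P_K P hP]
    exact measure_mono K_subset_S1
  have h2 : P (S 2 ⁻¹' Uset) = 0 := P_S2_zero P hP
  rw [h0, h1, h2, h3] at hmeas
  norm_num at hmeas
  have hu : (P Uset).toReal = 1/2 := by linarith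
  -- integrability of the coordinates
  have hb1 : ∀ x ∈ K, ‖(x : ℝ × ℝ).1‖ ≤ 1 := by
    intro x hx
    rw [mem_K] at hx
    rw [Real.norm_eq_abs, abs_le]
    exact ⟨by linarith [hx.1.1], hx.2.1⟩
  have hb2 : ∀ x ∈ K, ‖(x : ℝ × ℝ).2‖ ≤ 1 := by
    intro x hx
    rw [mem_K] at hx
    rw [Real.norm_eq_abs, abs_le]
    exact ⟨by linarith [hx.1.2], hx.2.2⟩
  have hint1 : Integrable (fun x : ℝ × ℝ => x.1) P :=
    integrable_of_K (P_compl_K P hP) measurable_fst.aestronglyMeasurable hb1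
  have hint2 : Integrable (fun x : ℝ × ℝ => x.2) P :=
    integrable_of_K (P_compl_K P hP) measurable_snd.aestronglyMeasurable hb2
  -- helper for affine set integrals
  have haff : ∀ (A : Set (ℝ × ℝ)) (g : ℝ × ℝ → ℝ), Integrable g P → ∀ c : ℝ,
      ∫ x in A, (g x / 3 + c) ∂P = (∫ x in A, g x ∂P) / 3 + c * (P A).toReal := by
    intro A g hg c
    rw [integral_add (hg.restrict.div_const 3) (integrable_const c), integral_div,
      setIntegral_const]
    rw [smul_eq_mul, measureReal_def]
    ring
  -- zero integral over S 2 ⁻¹' Uset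
  have hzero : ∀ g : ℝ × ℝ → ℝ, ∫ x in S 2 ⁻¹' Uset, g x ∂P = 0 := by
    intro g
    rw [Measure.restrict_eq_zero.2 (P_S2_zero P hP), integral_zero_measure]
  -- total integrals
  have eA1 : ∫ x : ℝ × ℝ, x.1 / 3 ∂P = (∫ x : ℝ × ℝ, x.1 ∂P) / 3 := integral_div 3 _
  have eA2 : ∫ x : ℝ × ℝ, x.2 / 3 ∂P = (∫ x : ℝ × ℝ, x.2 ∂P) / 3 := integral_div 3 _
  have eB1 : ∫ x : ℝ × ℝ, (x.1 / 3 + 2/3) ∂P = (∫ x : ℝ × ℝ, x.1 ∂P) / 3 + 2/3 := by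
    rw [integral_add (hint1.div_const 3) (integrable_const _), integral_div, integral_const]
    simp
  have eB2 : ∫ x : ℝ × ℝ, (x.2 / 3 + 2/3) ∂P = (∫ x : ℝ × ℝ, x.2 ∂P) / 3 + 2/3 := by
    rw [integral_add (hint2.div_const 3) (integrable_const _), integral_div, integral_const]
    simp
  have htot1 : ∫ x, (x : ℝ × ℝ).1 ∂P = 1/2 := by
    have hd := int_decomp P hP MeasurableSet.univ measurable_fst hb1
    simp only [preimage_univ, Measure.restrict_univ, S_zero, S_one, S_two, S_three] at hd
    rw [eA1, eB1] at hd
    linarith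
  have htot2 : ∫ x, (x : ℝ × ℝ).2 ∂P = 1/2 := by
    have hd := int_decomp P hP MeasurableSet.univ measurable_snd hb2
    simp only [preimage_univ, Measure.restrict_univ, S_zero, S_one, S_two, S_three] at hd
    rw [eA2, eB2] at hd
    linarith
  -- set integrals over Uset
  have eC1 : ∫ x in Uset, x.1 / 3 ∂P = (∫ x in Uset, (x : ℝ × ℝ).1 ∂P) / 3 := integral_div 3 _
  have eC2 : ∫ x in Uset, x.2 / 3 ∂P = (∫ x in Uset, (x : ℝ × ℝ).2 ∂P) / 3 := integral_div 3 _
  have eD1 : ∫ x in Uset, (x.1 / 3 + 2/3) ∂P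
      = (∫ x in Uset, (x : ℝ × ℝ).1 ∂P) / 3 + (2/3) * (P Uset).toReal :=
    haff Uset (fun x => x.1) hint1 (2/3)
  have eD2 : ∫ x in Uset, (x.2 / 3 + 2/3) ∂P
      = (∫ x in Uset, (x : ℝ × ℝ).2 ∂P) / 3 + (2/3) * (P Uset).toReal :=
    haff Uset (fun x => x.2) hint2 (2/3)
  have hm1 : ∫ x in Uset, (x : ℝ × ℝ).1 ∂P = 7/20 := by
    have hd := int_decomp P hP measurableSet_Uset measurable_fst hb1
    rw [restrict_S0 P hP, restrict_S1 P hP, restrict_S3 P hP, hzero] at hd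
    simp only [S_zero, S_one, S_three] at hd
    rw [eC1, eB1, eD1, htot1, hu] at hd
    linarith
  have hm2 : ∫ x in Uset, (x : ℝ × ℝ).2 ∂P = 3/20 := by
    have hd := int_decomp P hP measurableSet_Uset measurable_snd hb2
    rw [restrict_S0 P hP, restrict_S1 P hP, restrict_S3 P hP, hzero] at hd
    simp only [S_zero, S_one, S_three] at hd
    rw [eC2, eA2, eD2, htot2, hu] at hd
    linarith
  -- the vector integral
  have hbv : ∀ x ∈ K, ‖(x : ℝ × ℝ)‖ ≤ 1 := by
    intro x hx
    rw [Prod.norm_def]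
    exact max_le (hb1 x hx) (hb2 x hx)
  have hintv : Integrable (fun x : ℝ × ℝ => x) (P.restrict Uset) :=
    (integrable_of_K (P_compl_K P hP) measurable_id.aestronglyMeasurable hbv).restrict
  have hv : (∫ x in Uset, x ∂P) = ((7 : ℝ)/20, (3 : ℝ)/20) := by
    have hfst := (ContinuousLinearMap.fst ℝ ℝ ℝ).integral_comp_comm hintv
    have hsnd := (ContinuousLinearMap.snd ℝ ℝ ℝ).integral_comp_comm hintv
    simp only [ContinuousLinearMap.coe_fst', ContinuousLinearMap.coe_snd'] at hfst hsnd
    refine Prod.ext ?_ ?_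
    · exact hfst.symm.trans hm1
    · exact hsnd.symm.trans hm2
  rw [hv, hu]
  norm_num [Prod.smul_mk]
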